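/- Let λ be a positive real number and let m ≤ p be positive integers. The set of pairs (X, Y) of complex matrices, with X of size m×p and Y of size p×m, satisfying J_{λ,m}·S_m·Yᵀ = −X·J_{λ,p}·S_p and Yᵀ·S_p·J_{λ,p} = −S_m·J_{λ,m}·X, consists exactly of the pairs of the form X = [0_{m×(p−m)} | P] (the m×p matrix whose first p−m columns are zero and whose last m columns form P) and Y = −[[P],[0_{(p−m)×m}]] (the p×m matrix whose first m rows form P and whose remaining rows are zero), where P = Σ_{k=0}^{m−1} b_k·T_m^k ranges over all complex polynomial expressions in T_m of degree at most m−1. -/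

import Mathlib

open Matrix

noncomputable section

open scoped Classical

/-- The `m × m` upper-triangular Jordan block `J_{λ,m}` with eigenvalue `λ`. -/
def Jb (l : ℂ) (m : ℕ) : Matrix (Fin m) (Fin m) ℂ :=
  Matrix.of fun i j =>
    if (j : ℕ) = (i : ℕ) then l else if (j : ℕ) = (i : ℕ) + 1 then 1 else 0

/-- The `m × m` anti-diagonal matrix `S_m` ( `(i,j)` entry is `1` iff `i + j = m + 1`,
1-based). -/
def Sb (m : ℕ) : Matrix (Fin m) (Fin m) ℂ :=
  Matrix.of fun i j => if (i : ℕ) + (j : ℕ) + 1 = m then 1 else 0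

/-- The size `s(λ,m)` of the matrix `M_{λ,m}`: `m` if `λ ∈ ℝ`, and `2m` otherwise. -/
def sz (l : ℂ) (m : ℕ) : ℕ := if l.im = 0 then m else 2 * m

/-- The matrix `M_{λ,m}`: the Jordan block `J_{λ,m}` if `λ ∈ ℝ`, and the block matrix
`[[0, J_{λ²,m}], [I, 0]]` otherwise. -/
def Mb (l : ℂ) (m : ℕ) : Matrix (Fin (sz l m)) (Fin (sz l m)) ℂ :=
  Matrix.of fun i j =>
    if l.im = 0 then
      (if (j : ℕ) = (i : ℕ) then l else if (j : ℕ) = (i : ℕ) + 1 then 1 else 0)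
    else if (i : ℕ) < m ∧ m ≤ (j : ℕ) then
      (if (j : ℕ) - m = (i : ℕ) then l ^ 2
       else if (j : ℕ) - m = (i : ℕ) + 1 then 1 else 0)
    else if m ≤ (i : ℕ) ∧ (i : ℕ) - m = (j : ℕ) then 1 else 0

/-- The matrix `N_{λ,m}`: `S_m` if `λ ∈ ℝ` and `S_{2m}` otherwise. -/
def Nb (l : ℂ) (m : ℕ) : Matrix (Fin (sz l m)) (Fin (sz l m)) ℂ := Sb (sz l m)

/-- A complex number is normalized if `Re λ ≥ 0` and, when `Re λ = 0`, also `Im λ ≥ 0`. -/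
def Normalized (l : ℂ) : Prop := 0 ≤ l.re ∧ (l.re = 0 → 0 ≤ l.im)

/-- The linear map `B ↦ B * X + X * Bᵀ`. -/
def rmap {n : Type*} [Fintype n] (X : Matrix n n ℂ) :
    Matrix n n ℂ →ₗ[ℂ] Matrix n n ℂ where
  toFun B := B * X + X * Bᵀ
  map_add' B C := by
    simp only [Matrix.add_mul, Matrix.mul_add, Matrix.transpose_add]
    abel
  map_smul' c B := by
    simp only [Matrix.smul_mul, Matrix.mul_smul, Matrix.transpose_smul, smul_add,
      RingHom.id_apply]

/-- The linear map `B ↦ Bᵀ * Y + Y * B`. -/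
def lmap {n : Type*} [Fintype n] (Y : Matrix n n ℂ) :
    Matrix n n ℂ →ₗ[ℂ] Matrix n n ℂ where
  toFun B := Bᵀ * Y + Y * B
  map_add' B C := by
    simp only [Matrix.add_mul, Matrix.mul_add, Matrix.transpose_add]
    abel
  map_smul' c B := by
    simp only [Matrix.smul_mul, Matrix.mul_smul, Matrix.transpose_smul, smul_add,
      RingHom.id_apply]

/-- The subspace `𝒜°` associated with `(H, A)`:  matrices `B` with
`B·A·H⁻¹ + A·H⁻¹·Bᵀ = 0` and `Bᵀ·H·conj(A) + H·conj(A)·B = 0`. -/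
def scriptAo {n : Type*} [Fintype n] [DecidableEq n] (H A : Matrix n n ℂ) :
    Submodule ℂ (Matrix n n ℂ) :=
  LinearMap.ker (rmap (A * H⁻¹)) ⊓ LinearMap.ker (lmap (H * A.map (starRingEnd ℂ)))

/-- The subspace `𝒜` associated with `(H, A)`:  matrices `B` with
`B·A·H⁻¹ + A·H⁻¹·Bᵀ ∈ ℂ·(A·H⁻¹)` and `Bᵀ·H·conj(A) + H·conj(A)·B ∈ ℂ·(H·conj(A))`. -/
def scriptA {n : Type*} [Fintype n] [DecidableEq n] (H A : Matrix n n ℂ) :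
    Submodule ℂ (Matrix n n ℂ) :=
  Submodule.comap (rmap (A * H⁻¹)) (Submodule.span ℂ {A * H⁻¹}) ⊓
    Submodule.comap (lmap (H * A.map (starRingEnd ℂ)))
      (Submodule.span ℂ {H * A.map (starRingEnd ℂ)})

lemma mul_S_apply {m p : ℕ} (A : Matrix (Fin m) (Fin p) ℂ) (i : Fin m) (j : Fin p) :
    (A * Sb p) i j = A i ⟨p - 1 - (j : ℕ), by omega⟩ := by
  rw [mul_apply]
  rw [Finset.sum_eq_single (⟨p - 1 - (j : ℕ), by omega⟩ : Fin p)]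
  · simp [Sb]; intro h; omega
  · intro k _ hk
    simp only [Sb, of_apply]
    rw [if_neg (by intro h; apply hk; ext; simp; omega)]
    ring
  · intro h; exact absurd (Finset.mem_univ _) h

lemma S_mul_apply {m p : ℕ} (A : Matrix (Fin m) (Fin p) ℂ) (i : Fin m) (j : Fin p) :
    (Sb m * A) i j = A ⟨m - 1 - (i : ℕ), by omega⟩ j := by
  rw [mul_apply]
  rw [Finset.sum_eq_single (⟨m - 1 - (i : ℕ), by omega⟩ : Fin m)]
  · simp [Sb]; intro h; omega
  · intro k _ hk
    simp only [Sb, of_apply]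
    rw [if_neg (by intro h; apply hk; ext; simp; omega)]
    ring
  · intro h; exact absurd (Finset.mem_univ _) h

lemma SS (n : ℕ) : Sb n * Sb n = 1 := by
  ext i j
  rw [S_mul_apply]
  rcases eq_or_ne i j with h | h
  · subst h
    simp only [Sb, of_apply, one_apply_eq]
    rw [if_pos (by omega)]
  · simp only [Sb, of_apply, one_apply]
    rw [if_neg (by intro hh; apply h; ext; omega), if_neg h]

lemma SJ (l : ℂ) (n : ℕ) : Sb n * Jb l n = (Jb l n)ᵀ * Sb n := by
  ext i j
  rw [S_mul_apply, mul_S_apply]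
  simp only [Jb, of_apply, transpose_apply]
  split_ifs <;> first | rfl | omega

lemma Jsplit (l : ℂ) (n : ℕ) : Jb l n = l • (1 : Matrix (Fin n) (Fin n) ℂ) + Jb 0 n := by
  ext i j
  simp only [Jb, of_apply, Matrix.add_apply, Matrix.smul_apply, one_apply, smul_eq_mul]
  rcases eq_or_ne ((j : ℕ)) ((i : ℕ)) with h | h
  · have hij : i = j := Fin.ext h.symm
    subst hij
    simp
  · have hne : i ≠ j := fun hh => h (by rw [hh])
    simp [h, hne]

lemma Tt_mul_apply {m p : ℕ} (A : Matrix (Fin m) (Fin p) ℂ) (i : Fin m) (j : Fin p) :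
    ((Jb 0 m)ᵀ * A) i j = if h : (i : ℕ) = 0 then 0 else A ⟨(i : ℕ) - 1, by omega⟩ j := by
  rw [mul_apply]
  split_ifs with h
  · apply Finset.sum_eq_zero
    intro k _
    simp only [transpose_apply, Jb, of_apply]
    split_ifs with h1 h2
    · ring
    · exfalso; omega
    · ring
  · rw [Finset.sum_eq_single (⟨(i : ℕ) - 1, by omega⟩ : Fin m)]
    · simp only [transpose_apply, Jb, of_apply]
      split_ifs with h1 h2
      · first | omega | (simp only [Fin.val_mk] at *; omega)
      · ring
      · exfalso; apply h2; first | omega | (simp only [Fin.val_mk] at *; omega)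
    · intro k _ hk
      simp only [transpose_apply, Jb, of_apply]
      split_ifs with h1 h2
      · ring
      · exfalso; apply hk; ext; first | omega | (simp only [Fin.val_mk] at *; omega)
      · ring
    · intro hh; exact absurd (Finset.mem_univ _) hh

lemma mul_T_apply {m p : ℕ} (A : Matrix (Fin m) (Fin p) ℂ) (i : Fin m) (j : Fin p) :
    (A * Jb 0 p) i j = if h : (j : ℕ) = 0 then 0 else A i ⟨(j : ℕ) - 1, by omega⟩ := by
  rw [mul_apply]
  split_ifs with h
  · apply Finset.sum_eq_zero
    intro k _
    simp only [Jb, of_apply]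
    split_ifs with h1 h2
    · ring
    · exfalso; omega
    · ring
  · rw [Finset.sum_eq_single (⟨(j : ℕ) - 1, by omega⟩ : Fin p)]
    · simp only [Jb, of_apply]
      split_ifs with h1 h2
      · first | omega | (simp only [Fin.val_mk] at *; omega)
      · ring
      · exfalso; apply h2; first | omega | (simp only [Fin.val_mk] at *; omega)
    · intro k _ hk
      simp only [Jb, of_apply]
      split_ifs with h1 h2
      · ring
      · exfalso; apply hk; ext; first | omega | (simp only [Fin.val_mk] at *; omega)
      · ring
    · intro hh; exact absurd (Finset.mem_univ _) hh

lemma Tpow {m : ℕ} (k : ℕ) (i j : Fin m) :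
    (Jb 0 m ^ k) i j = if (j : ℕ) = (i : ℕ) + k then 1 else 0 := by
  induction k generalizing i j with
  | zero =>
    simp only [pow_zero, one_apply, Nat.add_zero]
    split_ifs with h1 h2 h3
    · rfl
    · exact absurd rfl (by rw [h1] at h2; exact h2)
    · exact absurd (Fin.ext (by omega : (i:ℕ) = (j:ℕ))) h1
    · rfl
  | succ k ih =>
    rw [pow_succ, mul_T_apply]
    split_ifs with h1 h2 h3
    · omega
    · rfl
    · rw [ih]
      split_ifs with h4
      · rfl
      · exfalso; apply h4; first | omega | (simp only [Fin.val_mk] at *; omega)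
    · rw [ih]
      split_ifs with h4
      · exfalso; first | omega | (simp only [Fin.val_mk] at *; omega)
      · rfl

lemma Pentry {m : ℕ} (b : Fin m → ℂ) (i j : Fin m) :
    (∑ k : Fin m, b k • Jb 0 m ^ (k : ℕ)) i j =
      if h : (i : ℕ) ≤ (j : ℕ) then b ⟨(j : ℕ) - (i : ℕ), by omega⟩ else 0 := by
  simp only [Matrix.sum_apply, Matrix.smul_apply, Tpow, smul_eq_mul]
  split_ifs with h
  · rw [Finset.sum_eq_single (⟨(j : ℕ) - (i : ℕ), by omega⟩ : Fin m)]
    · split_ifs with h1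
      · ring
      · exfalso; apply h1; first | omega | (simp only [Fin.val_mk] at *; omega)
    · intro k _ hk
      split_ifs with h1
      · exfalso; apply hk; ext; first | omega | (simp only [Fin.val_mk] at *; omega)
      · ring
    · intro hh; exact absurd (Finset.mem_univ _) hh
  · apply Finset.sum_eq_zero
    intro k _
    rw [if_neg (by omega)]; ring

lemma SJS (l : ℂ) (n : ℕ) : Sb n * Jb l n * Sb n = (Jb l n)ᵀ := by
  rw [SJ, mul_assoc, SS, mul_one]

lemma Jt_mul_apply {m p : ℕ} (l : ℂ) (A : Matrix (Fin m) (Fin p) ℂ) (i : Fin m) (j : Fin p) :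
    ((Jb l m)ᵀ * A) i j =
      l * A i j + (if h : (i : ℕ) = 0 then 0 else A ⟨(i : ℕ) - 1, by omega⟩ j) := by
  rw [Jsplit l m, transpose_add, transpose_smul, transpose_one, Matrix.add_mul, Matrix.smul_mul,
    Matrix.one_mul, Matrix.add_apply, Matrix.smul_apply, smul_eq_mul, Tt_mul_apply]

lemma mul_J_apply {m p : ℕ} (l : ℂ) (A : Matrix (Fin m) (Fin p) ℂ) (i : Fin m) (j : Fin p) :
    (A * Jb l p) i j =
      l * A i j + (if h : (j : ℕ) = 0 then 0 else A i ⟨(j : ℕ) - 1, by omega⟩) := by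
  rw [Jsplit l p, Matrix.mul_add, Matrix.mul_smul, Matrix.mul_one, Matrix.add_apply, Matrix.smul_apply, smul_eq_mul,
    mul_T_apply]

lemma JS (l : ℂ) (n : ℕ) : Sb n * (Jb l n)ᵀ = Jb l n * Sb n := by
  rw [← SJS]
  simp only [← Matrix.mul_assoc]
  rw [SS, Matrix.one_mul]

/-- For `λ > 0` and `m ≤ p`, the pairs `(X, Y)` solving
`J_{λ,m}·S_m·Yᵀ = −X·J_{λ,p}·S_p` and `Yᵀ·S_p·J_{λ,p} = −S_m·J_{λ,m}·X` are exactly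
those of the form `X = [0 | P]`, `Y = −[[P],[0]]` with `P` a polynomial in `T_m` of
degree at most `m − 1`. -/
theorem stmt4 (l : ℝ) (hl : 0 < l) (m p : ℕ) (hm : 0 < m) (hmp : m ≤ p)
    (X : Matrix (Fin m) (Fin p) ℂ) (Y : Matrix (Fin p) (Fin m) ℂ) :
    (Jb (l : ℂ) m * Sb m * Yᵀ = -(X * (Jb (l : ℂ) p * Sb p)) ∧
      Yᵀ * (Sb p * Jb (l : ℂ) p) = -(Sb m * Jb (l : ℂ) m * X)) ↔
    ∃ b : Fin m → ℂ,
      (∀ (i : Fin m) (j : Fin p), X i j =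
        if _h : (j : ℕ) < p - m then 0
        else (∑ k : Fin m, b k • Jb 0 m ^ (k : ℕ)) i
          ⟨(j : ℕ) - (p - m), by have := j.isLt; omega⟩) ∧
      (∀ (i : Fin p) (j : Fin m), Y i j =
        if h : (i : ℕ) < m then
          -((∑ k : Fin m, b k • Jb 0 m ^ (k : ℕ)) ⟨(i : ℕ), h⟩ j)
        else 0) := by
  constructor
  · rintro ⟨h1, h2⟩
    have hl0 : (l : ℂ) ≠ 0 := by
      simp only [ne_eq, Complex.ofReal_eq_zero]
      exact ne_of_gt hl
    have H1 : (Jb (l:ℂ) m)ᵀ * (Yᵀ * Sb p) = -((Sb m * X) * Jb (l:ℂ) p) := by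
      calc (Jb (l:ℂ) m)ᵀ * (Yᵀ * Sb p)
          = (Sb m * Jb (l:ℂ) m * Sb m) * (Yᵀ * Sb p) := by rw [SJS]
        _ = Sb m * (Jb (l:ℂ) m * Sb m * Yᵀ) * Sb p := by simp only [Matrix.mul_assoc]
        _ = Sb m * (-(X * (Jb (l:ℂ) p * Sb p))) * Sb p := by rw [h1]
        _ = -(Sb m * (X * (Jb (l:ℂ) p * (Sb p * Sb p)))) := by
            simp only [Matrix.mul_neg, Matrix.neg_mul, Matrix.mul_assoc]
        _ = -(Sb m * (X * Jb (l:ℂ) p)) := by rw [SS, Matrix.mul_one]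
        _ = -((Sb m * X) * Jb (l:ℂ) p) := by rw [← Matrix.mul_assoc]
    have H2 : (Yᵀ * Sb p) * Jb (l:ℂ) p = -((Jb (l:ℂ) m)ᵀ * (Sb m * X)) := by
      calc (Yᵀ * Sb p) * Jb (l:ℂ) p = Yᵀ * (Sb p * Jb (l:ℂ) p) := by
            simp only [Matrix.mul_assoc]
        _ = -(Sb m * Jb (l:ℂ) m * X) := h2
        _ = -((Jb (l:ℂ) m)ᵀ * (Sb m * X)) := by rw [SJ]; simp only [Matrix.mul_assoc]
    -- entrywise data
    set X' := Sb m * X with hX'def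
    set Z' := Yᵀ * Sb p with hZ'def
    set x : ℕ → ℕ → ℂ := fun a b => if h : a < m ∧ b < p then X' ⟨a, h.1⟩ ⟨b, h.2⟩ else 0
      with hxdef
    set z : ℕ → ℕ → ℂ := fun a b => if h : a < m ∧ b < p then Z' ⟨a, h.1⟩ ⟨b, h.2⟩ else 0
      with hzdef
    have hxv : ∀ (a b : ℕ) (ha : a < m) (hb : b < p), x a b = X' ⟨a, ha⟩ ⟨b, hb⟩ :=
      fun a b ha hb => dif_pos ⟨ha, hb⟩
    have hzv : ∀ (a b : ℕ) (ha : a < m) (hb : b < p), z a b = Z' ⟨a, ha⟩ ⟨b, hb⟩ :=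
      fun a b ha hb => dif_pos ⟨ha, hb⟩
    have hx0 : ∀ a b : ℕ, ¬(a < m ∧ b < p) → x a b = 0 := fun a b h => dif_neg h
    have hz0 : ∀ a b : ℕ, ¬(a < m ∧ b < p) → z a b = 0 := fun a b h => dif_neg h
    have E1 : ∀ (a b : ℕ), a < m → b < p →
        (l:ℂ) * z a b + (if a = 0 then 0 else z (a-1) b) =
          -((l:ℂ) * x a b + (if b = 0 then 0 else x a (b-1))) := by
      intro a b ha hb
      have ha1 : a - 1 < m := by omega
      have hb1 : b - 1 < p := by omega
      have e := congrFun (congrFun H1 ⟨a, ha⟩) ⟨b, hb⟩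
      rw [Jt_mul_apply, neg_apply, mul_J_apply] at e
      simp only [Fin.val_mk] at e
      by_cases ha0 : a = 0
      · rw [dif_pos ha0] at e
        rw [if_pos ha0]
        by_cases hb0 : b = 0
        · rw [dif_pos hb0] at e; rw [if_pos hb0]
          rw [hzv _ _ ha hb, hxv _ _ ha hb]; exact e
        · rw [dif_neg hb0] at e; rw [if_neg hb0]
          rw [hzv _ _ ha hb, hxv _ _ ha hb, hxv _ _ ha hb1]; exact e
      · rw [dif_neg ha0] at e
        rw [if_neg ha0]
        by_cases hb0 : b = 0
        · rw [dif_pos hb0] at e; rw [if_pos hb0]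
          rw [hzv _ _ ha hb, hxv _ _ ha hb, hzv _ _ ha1 hb]; exact e
        · rw [dif_neg hb0] at e; rw [if_neg hb0]
          rw [hzv _ _ ha hb, hxv _ _ ha hb, hzv _ _ ha1 hb, hxv _ _ ha hb1]; exact e
    have E2 : ∀ (a b : ℕ), a < m → b < p →
        (l:ℂ) * z a b + (if b = 0 then 0 else z a (b-1)) =
          -((l:ℂ) * x a b + (if a = 0 then 0 else x (a-1) b)) := by
      intro a b ha hb
      have ha1 : a - 1 < m := by omega
      have hb1 : b - 1 < p := by omega
      have e := congrFun (congrFun H2 ⟨a, ha⟩) ⟨b, hb⟩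
      rw [mul_J_apply, neg_apply, Jt_mul_apply] at e
      simp only [Fin.val_mk] at e
      by_cases ha0 : a = 0
      · rw [dif_pos ha0] at e
        rw [if_pos ha0]
        by_cases hb0 : b = 0
        · rw [dif_pos hb0] at e; rw [if_pos hb0]
          rw [hzv _ _ ha hb, hxv _ _ ha hb]; exact e
        · rw [dif_neg hb0] at e; rw [if_neg hb0]
          rw [hzv _ _ ha hb, hxv _ _ ha hb, hzv _ _ ha hb1]; exact e
      · rw [dif_neg ha0] at e
        rw [if_neg ha0]
        by_cases hb0 : b = 0
        · rw [dif_pos hb0] at e; rw [if_pos hb0]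
          rw [hzv _ _ ha hb, hxv _ _ ha hb, hxv _ _ ha1 hb]; exact e
        · rw [dif_neg hb0] at e; rw [if_neg hb0]
          rw [hzv _ _ ha hb, hxv _ _ ha hb, hzv _ _ ha hb1, hxv _ _ ha1 hb]; exact e
    -- d = z + x vanishes
    have hd : ∀ (n a b : ℕ), a + b ≤ n → z a b + x a b = 0 := by
      intro n
      induction n with
      | zero =>
        intro a b hab
        have ha : a = 0 := by omega
        have hb : b = 0 := by omega
        subst ha; subst hb
        have e1 := E1 0 0 hm (by omega)
        norm_num at e1
        have key : (l:ℂ) * (z 0 0 + x 0 0) = 0 := by linear_combination e1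
        exact (mul_eq_zero.mp key).resolve_left hl0
      | succ n ih =>
        intro a b hab
        by_cases hr : a < m ∧ b < p
        · obtain ⟨ham, hbp⟩ := hr
          have e1 := E1 a b ham hbp
          have e2 := E2 a b ham hbp
          have g1 : (if a = 0 then 0 else z (a-1) b) + (if a = 0 then 0 else x (a-1) b) = 0 := by
            split_ifs with h
            · simp
            · exact ih (a-1) b (by omega)
          have g2 : (if b = 0 then 0 else z a (b-1)) + (if b = 0 then 0 else x a (b-1)) = 0 := by
            split_ifs with h
            · simp
            · exact ih a (b-1) (by omega)
          have key : (2 * (l:ℂ)) * (z a b + x a b) = 0 := by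
            linear_combination e1 + e2 - g1 - g2
          have h2l : (2 * (l:ℂ)) ≠ 0 := by simp [hl0]
          exact (mul_eq_zero.mp key).resolve_left h2l
        · rw [hx0 a b hr, hz0 a b hr]; ring
    have hzx : ∀ a b : ℕ, z a b = - x a b := fun a b =>
      eq_neg_of_add_eq_zero_left (hd (a+b) a b le_rfl)
    have he : ∀ (a b : ℕ), a < m → b < p →
        (if a = 0 then 0 else x (a-1) b) = (if b = 0 then 0 else x a (b-1)) := by
      intro a b ha hb
      have e1 := E1 a b ha hb
      rw [hzx, hzx] at e1
      by_cases h1 : a = 0 <;> by_cases h2 : b = 0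
      · rw [if_pos h1, if_pos h2]
      · rw [if_pos h1] at e1 ⊢; rw [if_neg h2] at e1 ⊢; linear_combination -e1
      · rw [if_neg h1] at e1 ⊢; rw [if_pos h2] at e1 ⊢; linear_combination -e1
      · rw [if_neg h1] at e1 ⊢; rw [if_neg h2] at e1 ⊢; linear_combination -e1
    have hvan : ∀ (a b : ℕ), a < m → b < p → a + b + 1 < p → x a b = 0 := by
      intro a
      induction a with
      | zero =>
        intro b ha hb hlt
        have h := he 0 (b+1) hm (by omega)
        rw [if_pos rfl, if_neg (by omega)] at h
        simpa using h.symm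
      | succ a ih =>
        intro b ha hb hlt
        have h := he (a+1) (b+1) ha (by omega)
        rw [if_neg (by omega), if_neg (by omega)] at h
        simp only [Nat.add_sub_cancel] at h
        rw [← h]
        exact ih (b+1) (by omega) (by omega) (by omega)
    have hconst : ∀ (t a b : ℕ), a < m → b + t < p → t ≤ a → x a b = x (a - t) (b + t) := by
      intro t
      induction t with
      | zero => intro a b _ _ _; simp
      | succ t ih =>
        intro a b ha hbt hta
        have step := he a (b+1) ha (by omega)
        rw [if_neg (by omega), if_neg (by omega)] at step
        simp only [Nat.add_sub_cancel] at step
        rw [← step]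
        have h2 := ih (a-1) (b+1) (by omega) (by omega) (by omega)
        rw [h2]
        have e1 : a - 1 - t = a - (t+1) := by omega
        have e2 : b + 1 + t = b + (t+1) := by omega
        rw [e1, e2]
    have hXx : ∀ (i : Fin m) (j : Fin p), X i j = x (m - 1 - (i:ℕ)) (j:ℕ) := by
      intro i j
      have hX2 : X = Sb m * X' := by
        rw [hX'def, ← Matrix.mul_assoc, SS, Matrix.one_mul]
      conv_lhs => rw [hX2]
      rw [S_mul_apply]
      exact (hxv _ _ (by omega) j.isLt).symm
    have hYx : ∀ (i : Fin p) (j : Fin m), Y i j = z (j:ℕ) (p - 1 - (i:ℕ)) := by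
      intro i j
      have hY2 : Yᵀ = Z' * Sb p := by
        rw [hZ'def, Matrix.mul_assoc, SS, Matrix.mul_one]
      have h0 : Y i j = Yᵀ j i := rfl
      rw [h0]
      conv_lhs => rw [hY2]
      rw [mul_S_apply]
      exact (hzv _ _ j.isLt (by omega)).symm
    refine ⟨fun k => x (k:ℕ) (p-1), ?_, ?_⟩
    · intro i j
      rw [hXx i j]
      split_ifs with hjp
      · exact hvan _ _ (by omega) j.isLt (by omega)
      · rw [Pentry]
        split_ifs with hij
        · simp only [Fin.val_mk] at hij
          rw [hconst (p-1-(j:ℕ)) (m-1-(i:ℕ)) (j:ℕ) (by omega) (by omega) (by omega)]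
          beta_reduce
          simp only [Fin.val_mk]
          have e1 : m - 1 - (i:ℕ) - (p - 1 - (j:ℕ)) = (j:ℕ) - (p - m) - (i:ℕ) := by omega
          have e2 : (j:ℕ) + (p - 1 - (j:ℕ)) = p - 1 := by omega
          rw [e1, e2]
        · simp only [Fin.val_mk] at hij
          exact hvan _ _ (by omega) j.isLt (by omega)
    · intro i j
      rw [hYx i j, hzx]
      split_ifs with him
      · rw [Pentry]
        split_ifs with hij
        · simp only [Fin.val_mk] at hij
          rw [hconst (i:ℕ) (j:ℕ) (p-1-(i:ℕ)) j.isLt (by omega) (by omega)]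
          beta_reduce
          simp only [Fin.val_mk]
          have e1 : p - 1 - (i:ℕ) + (i:ℕ) = p - 1 := by omega
          rw [e1]
        · simp only [Fin.val_mk] at hij
          rw [hvan _ _ j.isLt (by omega) (by omega)]
      · rw [hvan _ _ j.isLt (by omega) (by omega)]
        ring
  · rintro ⟨b, hXf, hYf⟩
    have hA : ∀ (i : Fin m) (j : Fin p), (Sb m * X) i j =
        if h : p - 1 ≤ (i:ℕ) + (j:ℕ) then b ⟨(i:ℕ)+(j:ℕ)-(p-1), by omega⟩ else 0 := by
      intro i j
      rw [S_mul_apply, hXf]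
      by_cases h1 : (j:ℕ) < p - m
      · rw [dif_pos h1]
        split_ifs with h2
        · exfalso; omega
        · rfl
      · rw [dif_neg h1, Pentry]
        split_ifs with h2 h3 h4
        · congr 1; ext; simp only [Fin.val_mk]; omega
        · exfalso; simp only [Fin.val_mk] at h2; omega
        · exfalso; simp only [Fin.val_mk] at h2; omega
        · rfl
    have hZ : ∀ (i : Fin m) (j : Fin p), (Yᵀ * Sb p) i j =
        -(if h : p - 1 ≤ (i:ℕ) + (j:ℕ) then b ⟨(i:ℕ)+(j:ℕ)-(p-1), by omega⟩ else 0) := by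
      intro i j
      rw [mul_S_apply]
      have h0 : Yᵀ i ⟨p - 1 - (j:ℕ), by omega⟩ = Y ⟨p - 1 - (j:ℕ), by omega⟩ i := rfl
      rw [h0, hYf]
      by_cases hm1 : ((⟨p - 1 - (j:ℕ), by omega⟩ : Fin p) : ℕ) < m
      · rw [dif_pos hm1, Pentry]
        split_ifs with h3 h2 h4
        · congr 2
          ext; simp only [Fin.val_mk]; omega
        · exfalso; simp only [Fin.val_mk] at h3 h2; omega
        · exfalso; simp only [Fin.val_mk] at h3 h4; omega
        · simp
      · rw [dif_neg hm1]
        split_ifs with h2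
        · exfalso; simp only [Fin.val_mk] at hm1; omega
        · simp
    have hZX : Yᵀ * Sb p = -(Sb m * X) := by
      ext i j
      rw [hZ, neg_apply, hA]
    have hcomm : (Jb (l:ℂ) m)ᵀ * (Sb m * X) = (Sb m * X) * Jb (l:ℂ) p := by
      ext i j
      rw [Jt_mul_apply, mul_J_apply]
      congr 1
      by_cases h1 : (i:ℕ) = 0 <;> by_cases h2 : (j:ℕ) = 0
      · rw [dif_pos h1, dif_pos h2]
      · rw [dif_pos h1, dif_neg h2, hA]
        rw [dif_neg (by simp only [Fin.val_mk]; omega)]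
      · rw [dif_neg h1, dif_pos h2, hA]
        rw [dif_neg (by simp only [Fin.val_mk]; omega)]
      · rw [dif_neg h1, dif_neg h2, hA, hA]
        split_ifs with h3 h4 h5
        · congr 1; ext; simp only [Fin.val_mk]; omega
        · exfalso; simp only [Fin.val_mk] at h3 h4; omega
        · exfalso; simp only [Fin.val_mk] at h3 h5; omega
        · rfl
    have H1 : (Jb (l:ℂ) m)ᵀ * (Yᵀ * Sb p) = -((Sb m * X) * Jb (l:ℂ) p) := by
      rw [hZX, Matrix.mul_neg, hcomm]
    have H2 : (Yᵀ * Sb p) * Jb (l:ℂ) p = -((Jb (l:ℂ) m)ᵀ * (Sb m * X)) := by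
      rw [hZX, Matrix.neg_mul, hcomm]
    constructor
    · have e : Sb m * ((Jb (l:ℂ) m)ᵀ * (Yᵀ * Sb p)) * Sb p = Jb (l:ℂ) m * Sb m * Yᵀ := by
        simp only [← Matrix.mul_assoc]
        rw [Matrix.mul_assoc (Sb m * (Jb (l:ℂ) m)ᵀ * Yᵀ) (Sb p) (Sb p), SS, Matrix.mul_one,
          JS]
      rw [← e, H1]
      simp only [Matrix.mul_neg, Matrix.neg_mul, neg_inj]
      simp only [← Matrix.mul_assoc]
      rw [SS, Matrix.one_mul]
    · rw [show Sb m * Jb (l:ℂ) m * X = (Jb (l:ℂ) m)ᵀ * (Sb m * X) from by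
        rw [SJ]; simp only [Matrix.mul_assoc]]
      rw [← Matrix.mul_assoc]
      exact H2
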